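/- arXiv:1511.03097 — 6 statements merged into one kernel-verified Lean document; each statement's English description precedes it below -/
import Mathlib

section
/- Strongly p-summing multilinear operators satisfy the hyper-ideal property: let 1 ≤ m_1 < ⋯ < m_n be natural numbers, let A : E_1 × ⋯ × E_n → F be strongly p-summing with constant C, let B_1 : G_1 × ⋯ × G_{m_1} → E_1, ..., B_n : G_{m_{n-1}+1} × ⋯ × G_{m_n} → E_n be continuous multilinear operators and t : F → H a bounded linear operator. Then t ∘ A ∘ (B_1,...,B_n) : G_1 × ⋯ × G_{m_n} → H is strongly p-summing with constant ‖t‖ · C · ‖B_1‖ ⋯ ‖B_n‖. -/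
open scoped BigOperators

/-- `A` is strongly `p`-summing with constant `C`: for all finite sequences
`(x_j)_{j=1}^k` of tuples, `(∑ j ‖A x_j‖^p)^{1/p}` is at most `C` times the
supremum over all continuous multilinear forms `T` of norm at most `1` of
`(∑ j |T x_j|^p)^{1/p}`. -/
def StronglyPSummingWith {𝕜 : Type*} [RCLike 𝕜] {ι : Type*} [Fintype ι]
    {E : ι → Type*}
    [∀ i, NormedAddCommGroup (E i)] [∀ i, NormedSpace 𝕜 (E i)]
    {F : Type*} [NormedAddCommGroup F] [NormedSpace 𝕜 F]
    (p C : ℝ) (A : ContinuousMultilinearMap 𝕜 E F) : Prop :=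
  ∀ (k : ℕ) (x : Fin k → ∀ i, E i),
    (∑ j, ‖A (x j)‖ ^ p) ^ (1 / p) ≤
      C * ⨆ T : {T : ContinuousMultilinearMap 𝕜 E 𝕜 // ‖T‖ ≤ 1},
        (∑ j, ‖T.1 (x j)‖ ^ p) ^ (1 / p)

section aux

lemma aux_update_sigma {𝕜 : Type*} [RCLike 𝕜] {n : ℕ} {κ : Fin n → ℕ}
    {E : Fin n → Type*}
    [∀ i, NormedAddCommGroup (E i)] [∀ i, NormedSpace 𝕜 (E i)]
    {G : (Σ l : Fin n, Fin (κ l)) → Type*}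
    [∀ i, NormedAddCommGroup (G i)] [∀ i, NormedSpace 𝕜 (G i)]
    [DecidableEq ((l : Fin n) × Fin (κ l))]
    (B : ∀ l : Fin n, ContinuousMultilinearMap 𝕜 (fun i : Fin (κ l) => G ⟨l, i⟩) (E l))
    (x : ∀ i, G i) (l₀ : Fin n) (i₀ : Fin (κ l₀)) (v : G ⟨l₀, i₀⟩) :
    (fun l => B l (fun i => Function.update x ⟨l₀, i₀⟩ v ⟨l, i⟩)) =
      Function.update (fun l => B l (fun i => x ⟨l, i⟩)) l₀
        (B l₀ (Function.update (fun i => x ⟨l₀, i⟩) i₀ v)) := by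
  funext l
  rcases eq_or_ne l l₀ with rfl | hl
  · rw [Function.update_self]
    congr 1
    funext i
    rcases eq_or_ne i i₀ with rfl | hi
    · simp
    · rw [Function.update_of_ne hi, Function.update_of_ne]
      intro h
      exact hi (eq_of_heq (Sigma.mk.inj_iff.mp h).2)
  · rw [Function.update_of_ne hl]
    congr 1
    funext i
    rw [Function.update_of_ne]
    intro h
    exact hl (congrArg Sigma.fst h)

/-- The composition `T ∘ (B₁,…,Bₙ)` as a continuous multilinear map. -/
noncomputable def compSigma {𝕜 : Type*} [RCLike 𝕜] {n : ℕ} {κ : Fin n → ℕ}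
    {E : Fin n → Type*}
    [∀ i, NormedAddCommGroup (E i)] [∀ i, NormedSpace 𝕜 (E i)]
    {G : (Σ l : Fin n, Fin (κ l)) → Type*}
    [∀ i, NormedAddCommGroup (G i)] [∀ i, NormedSpace 𝕜 (G i)]
    (T : ContinuousMultilinearMap 𝕜 E 𝕜)
    (B : ∀ l : Fin n, ContinuousMultilinearMap 𝕜 (fun i : Fin (κ l) => G ⟨l, i⟩) (E l)) :
    ContinuousMultilinearMap 𝕜 G 𝕜 :=
  MultilinearMap.mkContinuous
    { toFun := fun x => T (fun l => B l (fun i => x ⟨l, i⟩))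
      map_update_add' := by
        intro _ x ⟨l₀, i₀⟩ a b
        rw [aux_update_sigma B x l₀ i₀ (a + b), aux_update_sigma B x l₀ i₀ a,
          aux_update_sigma B x l₀ i₀ b, (B l₀).map_update_add, T.map_update_add]
      map_update_smul' := by
        intro _ x ⟨l₀, i₀⟩ c a
        rw [aux_update_sigma B x l₀ i₀ (c • a), aux_update_sigma B x l₀ i₀ a,
          (B l₀).map_update_smul, T.map_update_smul] }
    (‖T‖ * ∏ l, ‖B l‖)
    (by
      intro x
      calc ‖T (fun l => B l (fun i => x ⟨l, i⟩))‖
          ≤ ‖T‖ * ∏ l, ‖B l (fun i => x ⟨l, i⟩)‖ := T.le_opNorm _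
        _ ≤ ‖T‖ * ∏ l, (‖B l‖ * ∏ i, ‖x ⟨l, i⟩‖) :=
            mul_le_mul_of_nonneg_left
              (Finset.prod_le_prod (fun l _ => norm_nonneg _)
                (fun l _ => (B l).le_opNorm _)) (norm_nonneg _)
        _ = (‖T‖ * ∏ l, ‖B l‖) * ∏ i : Σ l, Fin (κ l), ‖x i‖ := by
            have hprod : (∏ i : Σ l : Fin n, Fin (κ l), ‖x i‖) = ∏ l, ∏ i, ‖x ⟨l, i⟩‖ := by
              rw [← Finset.univ_sigma_univ, Finset.prod_sigma]
            rw [hprod, Finset.prod_mul_distrib]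
            ring)

lemma compSigma_apply {𝕜 : Type*} [RCLike 𝕜] {n : ℕ} {κ : Fin n → ℕ}
    {E : Fin n → Type*}
    [∀ i, NormedAddCommGroup (E i)] [∀ i, NormedSpace 𝕜 (E i)]
    {G : (Σ l : Fin n, Fin (κ l)) → Type*}
    [∀ i, NormedAddCommGroup (G i)] [∀ i, NormedSpace 𝕜 (G i)]
    (T : ContinuousMultilinearMap 𝕜 E 𝕜)
    (B : ∀ l : Fin n, ContinuousMultilinearMap 𝕜 (fun i : Fin (κ l) => G ⟨l, i⟩) (E l))
    (x : ∀ i, G i) :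
    compSigma T B x = T (fun l => B l (fun i => x ⟨l, i⟩)) := rfl

lemma compSigma_norm_le {𝕜 : Type*} [RCLike 𝕜] {n : ℕ} {κ : Fin n → ℕ}
    {E : Fin n → Type*}
    [∀ i, NormedAddCommGroup (E i)] [∀ i, NormedSpace 𝕜 (E i)]
    {G : (Σ l : Fin n, Fin (κ l)) → Type*}
    [∀ i, NormedAddCommGroup (G i)] [∀ i, NormedSpace 𝕜 (G i)]
    (T : ContinuousMultilinearMap 𝕜 E 𝕜)
    (B : ∀ l : Fin n, ContinuousMultilinearMap 𝕜 (fun i : Fin (κ l) => G ⟨l, i⟩) (E l)) :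
    ‖compSigma T B‖ ≤ ‖T‖ * ∏ l, ‖B l‖ :=
  MultilinearMap.mkContinuous_norm_le _
    (mul_nonneg (norm_nonneg _) (Finset.prod_nonneg fun _ _ => norm_nonneg _)) _

lemma aux_rpow_sum_le {p : ℝ} (hp : 1 ≤ p) {k : ℕ} (a b : Fin k → ℝ) (c : ℝ)
    (hc : 0 ≤ c) (ha : ∀ j, 0 ≤ a j) (hb : ∀ j, 0 ≤ b j) (h : ∀ j, a j ≤ c * b j) :
    (∑ j, a j ^ p) ^ (1 / p) ≤ c * (∑ j, b j ^ p) ^ (1 / p) := by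
  have hp0 : 0 < p := lt_of_lt_of_le one_pos hp
  have h1 : (∑ j, a j ^ p) ≤ c ^ p * ∑ j, b j ^ p := by
    rw [Finset.mul_sum]
    refine Finset.sum_le_sum fun j _ => ?_
    calc a j ^ p ≤ (c * b j) ^ p := Real.rpow_le_rpow (ha j) (h j) hp0.le
      _ = c ^ p * b j ^ p := Real.mul_rpow hc (hb j)
  calc (∑ j, a j ^ p) ^ (1 / p) ≤ (c ^ p * ∑ j, b j ^ p) ^ (1 / p) :=
        Real.rpow_le_rpow (Finset.sum_nonneg fun j _ => Real.rpow_nonneg (ha j) p) h1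
          (by positivity)
    _ = (c ^ p) ^ (1 / p) * (∑ j, b j ^ p) ^ (1 / p) :=
        Real.mul_rpow (Real.rpow_nonneg hc p)
          (Finset.sum_nonneg fun j _ => Real.rpow_nonneg (hb j) p)
    _ = c * (∑ j, b j ^ p) ^ (1 / p) := by
        rw [← Real.rpow_mul hc, mul_one_div, div_self hp0.ne', Real.rpow_one]

end aux

/-- the hyper-ideal property for strongly p-summing operators.
The domain `Fin m_n` is partitioned into `n` consecutive nonempty blocks of sizes
`κ l ≥ 1`, modelled by the index type `Σ l, Fin (κ l)`. If `D` is the composition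
`t ∘ A ∘ (B_1,…,B_n)` and `A` is strongly p-summing with constant `C`, then `D`
is strongly p-summing with constant `‖t‖ ⋅ C ⋅ ‖B_1‖⋯‖B_n‖`. -/
theorem stmt4 {𝕜 : Type*} [RCLike 𝕜] {n : ℕ} {κ : Fin n → ℕ} (hκ : ∀ l, 0 < κ l)
    {E : Fin n → Type*}
    [∀ i, NormedAddCommGroup (E i)] [∀ i, NormedSpace 𝕜 (E i)]
    [∀ i, CompleteSpace (E i)]
    {G : (Σ l : Fin n, Fin (κ l)) → Type*}
    [∀ i, NormedAddCommGroup (G i)] [∀ i, NormedSpace 𝕜 (G i)]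
    [∀ i, CompleteSpace (G i)]
    {F H : Type*} [NormedAddCommGroup F] [NormedSpace 𝕜 F] [CompleteSpace F]
    [NormedAddCommGroup H] [NormedSpace 𝕜 H] [CompleteSpace H]
    {p : ℝ} (hp : 1 ≤ p) {C : ℝ} (hC : 0 < C)
    (A : ContinuousMultilinearMap 𝕜 E F) (hA : StronglyPSummingWith p C A)
    (B : ∀ l : Fin n, ContinuousMultilinearMap 𝕜 (fun i : Fin (κ l) => G ⟨l, i⟩) (E l))
    (t : F →L[𝕜] H)
    (D : ContinuousMultilinearMap 𝕜 G H)
    (hD : ∀ x : ∀ i, G i, D x = t (A (fun l => B l (fun i => x ⟨l, i⟩)))) :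
    StronglyPSummingWith p (‖t‖ * C * ∏ l, ‖B l‖) D := by
  intro k x
  have hp0 : 0 < p := lt_of_lt_of_le one_pos hp
  set y : Fin k → ∀ l, E l := fun j l => B l (fun i => x j ⟨l, i⟩) with hy
  set c : ℝ := ∏ l, ‖B l‖ with hc
  have hc0 : 0 ≤ c := Finset.prod_nonneg fun _ _ => norm_nonneg _
  -- the supremum over forms on G
  set gnorm : {S : ContinuousMultilinearMap 𝕜 G 𝕜 // ‖S‖ ≤ 1} → ℝ :=
    fun S => (∑ j, ‖S.1 (x j)‖ ^ p) ^ (1 / p) with hgnorm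
  haveI hne1 : Nonempty {T : ContinuousMultilinearMap 𝕜 E 𝕜 // ‖T‖ ≤ 1} :=
    ⟨⟨0, by simp⟩⟩
  haveI hne2 : Nonempty {S : ContinuousMultilinearMap 𝕜 G 𝕜 // ‖S‖ ≤ 1} :=
    ⟨⟨0, by simp⟩⟩
  have hbdd : BddAbove (Set.range gnorm) := by
    refine ⟨(∑ j, (∏ i, ‖x j i‖) ^ p) ^ (1 / p), ?_⟩
    rintro _ ⟨S, rfl⟩
    have h := aux_rpow_sum_le hp (fun j => ‖S.1 (x j)‖) (fun j => ∏ i, ‖x j i‖) 1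
      zero_le_one (fun j => norm_nonneg _)
      (fun j => Finset.prod_nonneg fun _ _ => norm_nonneg _)
      (fun j => by
        rw [one_mul]
        exact le_trans (S.1.le_opNorm _)
          (mul_le_of_le_one_left (Finset.prod_nonneg fun _ _ => norm_nonneg _) S.2))
    rw [one_mul] at h
    exact h
  -- Step 1: compare sup over T on E with sup over S on G
  have hstep : (⨆ T : {T : ContinuousMultilinearMap 𝕜 E 𝕜 // ‖T‖ ≤ 1},
      (∑ j, ‖T.1 (y j)‖ ^ p) ^ (1 / p)) ≤ c * ⨆ S, gnorm S := by
    refine ciSup_le fun T => ?_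
    rcases eq_or_lt_of_le hc0 with h0 | hcpos
    · -- c = 0 : some B l is zero
      obtain ⟨l, -, hl⟩ := Finset.prod_eq_zero_iff.mp h0.symm
      have hBl : B l = 0 := norm_eq_zero.mp hl
      have : ∀ j, T.1 (y j) = 0 := fun j => by
        apply T.1.map_coord_zero (i := l)
        simp [hy, hBl]
      have hsum : (∑ j, ‖T.1 (y j)‖ ^ p) = 0 := by
        simp [this, Real.zero_rpow hp0.ne']
      rw [hsum, Real.zero_rpow (one_div_ne_zero hp0.ne'), ← h0, zero_mul]
    · -- c > 0
      set S₀ : ContinuousMultilinearMap 𝕜 G 𝕜 := ((c⁻¹ : ℝ) : 𝕜) • compSigma T.1 B with hS₀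
      have hS₀norm : ‖S₀‖ ≤ 1 := by
        have hns := norm_smul ((c⁻¹ : ℝ) : 𝕜) (compSigma T.1 B)
        rw [hS₀, hns]
        have : ‖((c⁻¹ : ℝ) : 𝕜)‖ = c⁻¹ := by
          rw [RCLike.norm_ofReal, abs_of_nonneg (inv_nonneg.mpr hc0)]
        rw [this]
        calc c⁻¹ * ‖compSigma T.1 B‖ ≤ c⁻¹ * (‖T.1‖ * c) := by
              gcongr
              exact compSigma_norm_le T.1 B
          _ ≤ c⁻¹ * (1 * c) := by gcongr; exact T.2
          _ = 1 := by field_simp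
      have hval : ∀ j, ‖T.1 (y j)‖ ≤ c * ‖S₀ (x j)‖ := by
        intro j
        have : S₀ (x j) = ((c⁻¹ : ℝ) : 𝕜) * T.1 (y j) := by
          simp [hS₀, compSigma_apply, hy]
        rw [this, norm_mul, RCLike.norm_ofReal, abs_of_nonneg (inv_nonneg.mpr hc0),
          ← mul_assoc, mul_inv_cancel₀ hcpos.ne', one_mul]
      calc (∑ j, ‖T.1 (y j)‖ ^ p) ^ (1 / p)
          ≤ c * (∑ j, ‖S₀ (x j)‖ ^ p) ^ (1 / p) :=
            aux_rpow_sum_le hp _ _ c hc0 (fun j => norm_nonneg _) (fun j => norm_nonneg _) hval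
        _ ≤ c * ⨆ S, gnorm S := by
            gcongr
            exact le_ciSup hbdd ⟨S₀, hS₀norm⟩
  -- Step 2: assemble
  have h1 : (∑ j, ‖D (x j)‖ ^ p) ^ (1 / p) ≤ ‖t‖ * (∑ j, ‖A (y j)‖ ^ p) ^ (1 / p) := by
    refine aux_rpow_sum_le hp _ _ ‖t‖ (norm_nonneg _) (fun j => norm_nonneg _)
      (fun j => norm_nonneg _) fun j => ?_
    rw [hD]
    exact t.le_opNorm _
  have h2 := hA k y
  calc (∑ j, ‖D (x j)‖ ^ p) ^ (1 / p)
      ≤ ‖t‖ * (∑ j, ‖A (y j)‖ ^ p) ^ (1 / p) := h1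
    _ ≤ ‖t‖ * (C * ⨆ T : {T : ContinuousMultilinearMap 𝕜 E 𝕜 // ‖T‖ ≤ 1},
          (∑ j, ‖T.1 (y j)‖ ^ p) ^ (1 / p)) := by gcongr
    _ ≤ ‖t‖ * (C * (c * ⨆ S, gnorm S)) := by gcongr
    _ = ‖t‖ * C * c * ⨆ S, gnorm S := by ring
end

section
/- Let I be an operator ideal, A : E_1 × ⋯ × E_n → F a continuous n-linear operator such that A(B_{E_1} × ⋯ × B_{E_n}) is I-bounded, let B_l : G_{m_{l-1}+1} × ⋯ × G_{m_l} → E_l (l = 1,...,n, with 1 ≤ m_1 < ⋯ < m_n, m_0 = 0) be continuous multilinear operators, and t : F → G a bounded linear operator. Then (t ∘ A ∘ (B_1,...,B_n))(B_{G_1} × ⋯ × B_{G_{m_n}}) is an I-bounded subset of G. -/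
open scoped BigOperators

/-- A bundled Banach space over `𝕜`. -/
structure BanachSp (𝕜 : Type) [RCLike 𝕜] where
  X : Type
  [grp : NormedAddCommGroup X]
  [nsp : NormedSpace 𝕜 X]
  [cpl : CompleteSpace X]

attribute [instance] BanachSp.grp BanachSp.nsp BanachSp.cpl

/-- An operator ideal: to each pair of Banach spaces it assigns a linear subspace
of the bounded operators containing the finite rank operators, stable under
composition with bounded operators on both sides. -/
structure OperatorIdeal (𝕜 : Type) [RCLike 𝕜] where
  mem : ∀ H F : BanachSp 𝕜, Set (H.X →L[𝕜] F.X)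
  zero_mem : ∀ H F : BanachSp 𝕜, (0 : H.X →L[𝕜] F.X) ∈ mem H F
  add_mem : ∀ (H F : BanachSp 𝕜) (u v : H.X →L[𝕜] F.X),
    u ∈ mem H F → v ∈ mem H F → u + v ∈ mem H F
  smul_mem : ∀ (H F : BanachSp 𝕜) (c : 𝕜) (u : H.X →L[𝕜] F.X),
    u ∈ mem H F → c • u ∈ mem H F
  finiteRank_mem : ∀ (H F : BanachSp 𝕜) (u : H.X →L[𝕜] F.X),
    FiniteDimensional 𝕜 (LinearMap.range (u : H.X →ₗ[𝕜] F.X)) → u ∈ mem H F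
  comp_mem : ∀ (G H F K : BanachSp 𝕜) (s : G.X →L[𝕜] H.X) (u : H.X →L[𝕜] F.X)
    (t : F.X →L[𝕜] K.X), u ∈ mem H F → t.comp (u.comp s) ∈ mem G K

/-- A subset `K` of a Banach space `F` is `I`-bounded if `K ⊆ u(B_H)` for some
Banach space `H` and some `u ∈ I(H;F)`. -/
def IsIBounded {𝕜 : Type} [RCLike 𝕜] (I : OperatorIdeal 𝕜) (F : BanachSp 𝕜)
    (K : Set F.X) : Prop :=
  ∃ H : BanachSp 𝕜, ∃ u ∈ I.mem H F, K ⊆ u '' Metric.closedBall 0 1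

/-- if `A(B_{E_1} × ⋯ × B_{E_n})` is I-bounded, then for any
continuous multilinear operators `B_l` (defined on consecutive nonempty blocks
of the domain, modelled by the index type `Σ l, Fin (κ l)`) and any bounded
linear operator `t`, the image of the product of unit balls under
`t ∘ A ∘ (B_1,…,B_n)` is I-bounded. -/
theorem stmt8 {𝕜 : Type} [RCLike 𝕜] (I : OperatorIdeal 𝕜)
    {n : ℕ} {κ : Fin n → ℕ} (hκ : ∀ l, 0 < κ l)
    {E : Fin n → Type}
    [∀ i, NormedAddCommGroup (E i)] [∀ i, NormedSpace 𝕜 (E i)]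
    [∀ i, CompleteSpace (E i)]
    {G : (Σ l : Fin n, Fin (κ l)) → Type}
    [∀ i, NormedAddCommGroup (G i)] [∀ i, NormedSpace 𝕜 (G i)]
    [∀ i, CompleteSpace (G i)]
    (F Gt : BanachSp 𝕜)
    (A : ContinuousMultilinearMap 𝕜 E F.X)
    (hA : IsIBounded I F (A '' {x : ∀ i, E i | ∀ i, ‖x i‖ ≤ 1}))
    (B : ∀ l : Fin n, ContinuousMultilinearMap 𝕜 (fun i : Fin (κ l) => G ⟨l, i⟩) (E l))
    (t : F.X →L[𝕜] Gt.X) :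
    IsIBounded I Gt
      ((fun x : ∀ i, G i => t (A (fun l => B l (fun i => x ⟨l, i⟩)))) ''
        {x : ∀ i, G i | ∀ i, ‖x i‖ ≤ 1}) := by
  obtain ⟨H, u, hu, hsub⟩ := hA
  set c : Fin n → 𝕜 := fun l => ((max ‖B l‖ 1 : ℝ) : 𝕜) with hc
  have hcnorm : ∀ l, ‖c l‖ = max ‖B l‖ 1 := fun l => by
    have h0 : (0:ℝ) ≤ max ‖B l‖ 1 := le_trans zero_le_one (le_max_right ‖B l‖ 1)
    simp [hc, abs_of_nonneg h0]
  have hcne : ∀ l, c l ≠ 0 := fun l => by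
    intro h
    have := hcnorm l
    rw [h, norm_zero] at this
    have : (1:ℝ) ≤ 0 := le_trans (le_max_right ‖B l‖ 1) this.ge
    linarith
  refine ⟨H, (∏ l, c l) • (t.comp u), I.smul_mem _ _ _ _ ?_, ?_⟩
  · have := I.comp_mem H H F Gt (ContinuousLinearMap.id 𝕜 H.X) u t hu
    simpa using this
  · rintro _ ⟨x, hx, rfl⟩
    set y : ∀ l, E l := fun l => B l (fun i => x ⟨l, i⟩) with hy
    set y' : ∀ l, E l := fun l => (c l)⁻¹ • y l with hy'
    have hynorm : ∀ l, ‖y l‖ ≤ max ‖B l‖ 1 := by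
      intro l
      refine le_trans ?_ (le_max_left _ _)
      calc ‖y l‖ ≤ ‖B l‖ * ∏ i, ‖x ⟨l, i⟩‖ := (B l).le_opNorm _
        _ ≤ ‖B l‖ * 1 := mul_le_mul_of_nonneg_left
            (Finset.prod_le_one (fun i _ => norm_nonneg _) (fun i _ => hx ⟨l, i⟩))
            (norm_nonneg _)
        _ = ‖B l‖ := mul_one _
    have hy'mem : y' ∈ {x : ∀ i, E i | ∀ i, ‖x i‖ ≤ 1} := by
      intro l
      rw [hy', norm_smul, norm_inv, hcnorm]
      have hpos : (0:ℝ) < max ‖B l‖ 1 := lt_of_lt_of_le one_pos (le_max_right _ _)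
      rw [inv_mul_le_one₀ hpos]
      simpa using hynorm l
    obtain ⟨z, hz, hz2⟩ := hsub ⟨y', hy'mem, rfl⟩
    refine ⟨z, hz, ?_⟩
    have hAy : A y = (∏ l, c l) • A y' := by
      have : (fun l => c l • y' l) = y := by
        funext l
        rw [hy']
        rw [smul_inv_smul₀ (hcne l)]
      rw [← this, A.map_smul_univ]
    simp only [ContinuousLinearMap.smul_apply, ContinuousLinearMap.comp_apply, hz2]
    rw [← hy, hAy, map_smul]
end

section
/- Let A : E_1 × ⋯ × E_n → F be a continuous n-linear operator such that A(B_{E_1} × ⋯ × B_{E_n}) is relatively weakly compact in F. Then for continuous multilinear operators B_1,...,B_n as in the hyper-ideal property and a bounded linear operator t : F → H, the set (t ∘ A ∘ (B_1,...,B_n))(B_{G_1} × ⋯ × B_{G_{m_n}}) is relatively weakly compact in H. -/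
open scoped BigOperators

/-- if a continuous multilinear operator `A` maps the product of
closed unit balls to a relatively weakly compact set, then so does any
composition `t ∘ A ∘ (B_1,…,B_n)` with continuous multilinear operators `B_l`
(on consecutive blocks, modelled by `Σ l, Fin (κ l)`) and bounded linear `t`.
Relative weak compactness is expressed as compactness of the closure of the
image in the weak space. -/
theorem stmt11 {𝕜 : Type*} [RCLike 𝕜] {n : ℕ} {κ : Fin n → ℕ} (hκ : ∀ l, 0 < κ l)
    {E : Fin n → Type*}
    [∀ i, NormedAddCommGroup (E i)] [∀ i, NormedSpace 𝕜 (E i)]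
    [∀ i, CompleteSpace (E i)]
    {G : (Σ l : Fin n, Fin (κ l)) → Type*}
    [∀ i, NormedAddCommGroup (G i)] [∀ i, NormedSpace 𝕜 (G i)]
    [∀ i, CompleteSpace (G i)]
    {F H : Type*} [NormedAddCommGroup F] [NormedSpace 𝕜 F] [CompleteSpace F]
    [NormedAddCommGroup H] [NormedSpace 𝕜 H] [CompleteSpace H]
    (A : ContinuousMultilinearMap 𝕜 E F)
    (hA : IsCompact (closure ((toWeakSpace 𝕜 F) ''
      (A '' {x : ∀ i, E i | ∀ i, ‖x i‖ ≤ 1}))))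
    (B : ∀ l : Fin n, ContinuousMultilinearMap 𝕜 (fun i : Fin (κ l) => G ⟨l, i⟩) (E l))
    (t : F →L[𝕜] H) :
    IsCompact (closure ((toWeakSpace 𝕜 H) ''
      ((fun x : ∀ i, G i => t (A (fun l => B l (fun i => x ⟨l, i⟩)))) ''
        {x : ∀ i, G i | ∀ i, ‖x i‖ ≤ 1}))) := by

  classical
  set c : Fin n → ℝ := fun l => max ‖B l‖ 1 with hc
  have hcpos : ∀ l, 0 < c l := fun l => lt_of_lt_of_le one_pos (le_max_right _ _)
  set s : 𝕜 := ∏ l, ((c l : ℝ) : 𝕜) with hs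
  set g : WeakSpace 𝕜 F →L[𝕜] WeakSpace 𝕜 H := WeakSpace.map (s • t) with hg
  have hK : IsCompact (g '' closure ((toWeakSpace 𝕜 F) ''
      (A '' {x : ∀ i, E i | ∀ i, ‖x i‖ ≤ 1}))) := hA.image g.continuous
  refine hK.closure_of_subset ?_
  rintro _ ⟨_, ⟨x, hx, rfl⟩, rfl⟩
  set u : ∀ l, E l := fun l => (((c l : ℝ) : 𝕜))⁻¹ • B l (fun i => x ⟨l, i⟩) with hu
  have hcne : ∀ l, ((c l : ℝ) : 𝕜) ≠ 0 := fun l => by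
    exact_mod_cast (hcpos l).ne'
  have hub : ∀ l, ‖u l‖ ≤ 1 := by
    intro l
    have h1 : ‖B l (fun i => x ⟨l, i⟩)‖ ≤ ‖B l‖ * ∏ i, ‖x ⟨l, i⟩‖ :=
      (B l).le_opNorm _
    have h2 : (∏ i : Fin (κ l), ‖x ⟨l, i⟩‖) ≤ 1 :=
      Finset.prod_le_one (fun i _ => norm_nonneg _) (fun i _ => hx ⟨l, i⟩)
    have h3 : ‖B l (fun i => x ⟨l, i⟩)‖ ≤ c l := by
      calc ‖B l (fun i => x ⟨l, i⟩)‖ ≤ ‖B l‖ * ∏ i, ‖x ⟨l, i⟩‖ := h1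
        _ ≤ ‖B l‖ * 1 := by
            exact mul_le_mul_of_nonneg_left h2 (norm_nonneg _)
        _ = ‖B l‖ := mul_one _
        _ ≤ c l := le_max_left _ _
    have : ‖u l‖ = (c l)⁻¹ * ‖B l (fun i => x ⟨l, i⟩)‖ := by
      rw [hu]
      simp [norm_smul, norm_inv, RCLike.norm_ofReal, abs_of_pos (hcpos l)]
    rw [this, inv_mul_le_iff₀ (hcpos l), mul_one]
    exact h3
  have hBu : (fun l => B l (fun i => x ⟨l, i⟩)) = fun l => ((c l : ℝ) : 𝕜) • u l := by
    funext l
    rw [hu, smul_inv_smul₀ (hcne l)]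
  refine ⟨toWeakSpace 𝕜 F (A u), subset_closure ⟨A u, ⟨u, hub, rfl⟩, rfl⟩, ?_⟩
  have key : (A fun l => B l fun i => x ⟨l, i⟩) = s • A u := by
    conv_lhs => rw [hBu]
    exact A.map_smul_univ _ _
  show (s • t) (A u) = toWeakSpace 𝕜 H (t (A fun l => B l fun i => x ⟨l, i⟩))
  rw [key, map_smul]
  rfl
end

section
/- Let p ≥ 1. A subset K of a Banach space F is relatively p-compact (i.e., K ⊆ {∑_j λ_j x_j : (λ_j) ∈ B_{ℓ_{p'}}} for some (x_j) ∈ ℓ_p(F)) if and only if K is I-bounded for the ideal K_p of p-compact linear operators, i.e., there exist a Banach space H and a p-compact linear operator u : H → F with K ⊆ u(B_H). -/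
open scoped BigOperators ENNReal

/-- The set `{∑_j λ_j • x_j : (λ_j) ∈ B_{ℓ_{p'}}}` of `p'`-convex combinations of
the sequence `x`. -/
def pSumSet (𝕜 : Type*) [RCLike 𝕜] {F : Type*} [NormedAddCommGroup F]
    [NormedSpace 𝕜 F] (p' : ℝ≥0∞) [Fact (1 ≤ p')] (x : ℕ → F) : Set F :=
  {y | ∃ l : lp (fun _ : ℕ => 𝕜) p', ‖l‖ ≤ 1 ∧ y = ∑' j, l j • x j}

/-- A subset `K` of a Banach space is relatively `p`-compact if
`K ⊆ {∑_j λ_j x_j : (λ_j) ∈ B_{ℓ_{p'}}}` for some `(x_j) ∈ ℓ_p(F)`,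
where `p'` is the conjugate exponent of `p`. -/
def RelPCompact (𝕜 : Type*) [RCLike 𝕜] {F : Type*} [NormedAddCommGroup F]
    [NormedSpace 𝕜 F] (p : ℝ) (p' : ℝ≥0∞) [Fact (1 ≤ p')] (K : Set F) : Prop :=
  ∃ x : ℕ → F, Summable (fun j => ‖x j‖ ^ p) ∧ K ⊆ pSumSet 𝕜 p' x

/-- The `p`-compact "size" of a set `K`: the infimum of `‖(x_j)‖_{ℓ_p}` over all
sequences `(x_j) ∈ ℓ_p(F)` with `K ⊆ {∑_j λ_j x_j : (λ_j) ∈ B_{ℓ_{p'}}}`. -/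
noncomputable def kpSetNorm (𝕜 : Type*) [RCLike 𝕜] {F : Type*}
    [NormedAddCommGroup F] [NormedSpace 𝕜 F] (p : ℝ) (p' : ℝ≥0∞) [Fact (1 ≤ p')]
    (K : Set F) : ℝ :=
  sInf {c | ∃ x : ℕ → F, Summable (fun j => ‖x j‖ ^ p) ∧ K ⊆ pSumSet 𝕜 p' x ∧
    c = (∑' j, ‖x j‖ ^ p) ^ (1 / p)}

/-- Hölder-type bound: the coefficient series converges absolutely with norm
bounded by `(∑ ‖x j‖^p)^(1/p) * ‖l‖`. -/
lemma key_bound {𝕜 : Type} [RCLike 𝕜] {F : Type} [NormedAddCommGroup F]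
    [NormedSpace 𝕜 F] {p : ℝ} (hp : 1 ≤ p) (p' : ℝ≥0∞) [Fact (1 ≤ p')]
    (hconj : 1 / ENNReal.ofReal p + 1 / p' = 1)
    {x : ℕ → F} (hx : Summable (fun j => ‖x j‖ ^ p))
    (l : lp (fun _ : ℕ => 𝕜) p') :
    Summable (fun j => ‖l j • x j‖) ∧
      ∑' j, ‖l j • x j‖ ≤ (∑' j, ‖x j‖ ^ p) ^ (1 / p) * ‖l‖ := by
  have hnorm : ∀ j, ‖l j • x j‖ = ‖x j‖ * ‖l j‖ := fun j => by
    rw [norm_smul, mul_comm]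
  by_cases htop : p' = ∞
  · -- then p = 1
    subst htop
    have hp1 : p = 1 := by
      have : 1 / ENNReal.ofReal p = 1 := by simpa using hconj
      have : ENNReal.ofReal p = 1 := by
        rw [one_div] at this
        simpa using congrArg (·⁻¹) this
      have := ENNReal.ofReal_eq_one.mp this
      linarith
    subst hp1
    simp only [Real.rpow_one] at hx ⊢
    have hb : ∀ j, ‖l j • x j‖ ≤ ‖x j‖ * ‖l‖ := fun j => by
      rw [hnorm]
      exact mul_le_mul_of_nonneg_left (lp.norm_apply_le_norm ENNReal.top_ne_zero l j)
        (norm_nonneg _)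
    have hsum : Summable fun j => ‖x j‖ * ‖l‖ := hx.mul_right _
    have hsummable : Summable fun j => ‖l j • x j‖ :=
      Summable.of_nonneg_of_le (fun j => norm_nonneg _) hb hsum
    refine ⟨hsummable, ?_⟩
    calc ∑' j, ‖l j • x j‖ ≤ ∑' j, ‖x j‖ * ‖l‖ := Summable.tsum_le_tsum hb hsummable hsum
      _ = (∑' j, ‖x j‖) * ‖l‖ := tsum_mul_right
      _ = (∑' j, ‖x j‖) ^ (1 / (1:ℝ)) * ‖l‖ := by rw [one_div_one, Real.rpow_one]
  · -- p > 1, use Hölder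
    have hq_pos : 0 < p'.toReal := by
      refine ENNReal.toReal_pos (fun h0 => ?_) htop
      have := (Fact.out : (1:ℝ≥0∞) ≤ p')
      simp [h0] at this
    have hconjR : p.HolderConjugate p'.toReal := by
      have hfin1 : (1 / ENNReal.ofReal p) ≠ ∞ := by
        simp [ENNReal.div_eq_top]
        linarith
      have hfin2 : (1 / p') ≠ ∞ := by
        simp [ENNReal.div_eq_top]
        intro h0
        have := (Fact.out : (1:ℝ≥0∞) ≤ p')
        simp [h0] at this
      have htr : (1 / ENNReal.ofReal p).toReal + (1 / p').toReal = 1 := by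
        rw [← ENNReal.toReal_add hfin1 hfin2, hconj]; simp
      have h1 : (1 / ENNReal.ofReal p).toReal = 1 / p := by
        rw [one_div, ENNReal.toReal_inv, ENNReal.toReal_ofReal (by linarith), one_div]
      have h2 : (1 / p').toReal = 1 / p'.toReal := by
        rw [one_div, ENNReal.toReal_inv, one_div]
      rw [h1, h2, one_div, one_div] at htr
      rw [Real.holderConjugate_iff]
      constructor
      · rcases lt_or_eq_of_le hp with h | h
        · exact h
        · exfalso
          rw [← h] at htr
          have : p'.toReal⁻¹ = 0 := by norm_num at htr; linarith
          rw [inv_eq_zero] at this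
          exact hq_pos.ne' this
      · exact htr
    have hlsum : Summable fun j => ‖l j‖ ^ p'.toReal :=
      (memℓp_gen_iff hq_pos).mp (lp.memℓp l)
    obtain ⟨hs, hb⟩ := Real.summable_and_inner_le_Lp_mul_Lq_tsum_of_nonneg hconjR
      (fun j => norm_nonneg (x j)) (fun j => norm_nonneg (l j)) hx hlsum
    have hsummable : Summable fun j => ‖l j • x j‖ := by
      simpa only [hnorm] using hs
    refine ⟨hsummable, ?_⟩
    calc ∑' j, ‖l j • x j‖ = ∑' j, ‖x j‖ * ‖l j‖ := by simp only [hnorm]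
      _ ≤ (∑' j, ‖x j‖ ^ p) ^ (1 / p) * (∑' j, ‖l j‖ ^ p'.toReal) ^ (1 / p'.toReal) := hb
      _ = (∑' j, ‖x j‖ ^ p) ^ (1 / p) * ‖l‖ := by
          rw [← lp.norm_eq_tsum_rpow hq_pos l]

/-- a subset `K` of a Banach space `F` is relatively p-compact iff
there are a Banach space `H` and a p-compact linear operator `u : H → F` (i.e.
`u(B_H)` is relatively p-compact) with `K ⊆ u(B_H)`. -/
theorem stmt13 {𝕜 : Type} [RCLike 𝕜] {F : Type} [NormedAddCommGroup F]
    [NormedSpace 𝕜 F] [CompleteSpace F]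
    {p : ℝ} (hp : 1 ≤ p) (p' : ℝ≥0∞) [Fact (1 ≤ p')]
    (hconj : 1 / ENNReal.ofReal p + 1 / p' = 1)
    (K : Set F) :
    RelPCompact 𝕜 p p' K ↔
      ∃ H : BanachSp 𝕜, ∃ u : H.X →L[𝕜] F,
        RelPCompact 𝕜 p p' (u '' Metric.closedBall 0 1) ∧
        K ⊆ u '' Metric.closedBall 0 1 := by
  constructor
  · rintro ⟨x, hx, hsub⟩
    set C : ℝ := (∑' j, ‖x j‖ ^ p) ^ (1 / p) with hC
    have hsmul : ∀ l : lp (fun _ : ℕ => 𝕜) p', Summable fun j => l j • x j := fun l =>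
      ((key_bound hp p' hconj hx l).1).of_norm
    -- the linear map
    let ulin : lp (fun _ : ℕ => 𝕜) p' →ₗ[𝕜] F :=
      { toFun := fun l => ∑' j, l j • x j
        map_add' := fun a b => by
          have : ∀ j, (↑(a + b) : ∀ _ : ℕ, 𝕜) j • x j = a j • x j + b j • x j := fun j => by
            rw [lp.coeFn_add]; simp [add_smul]
          simp only [this]
          exact Summable.tsum_add (hsmul a) (hsmul b)
        map_smul' := fun c a => by
          have : ∀ j, (↑(c • a) : ∀ _ : ℕ, 𝕜) j • x j = c • (a j • x j) := fun j => by
            rw [lp.coeFn_smul]; simp [smul_smul]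
          simp only [this, RingHom.id_apply]
          exact tsum_const_smul'' c }
    have hbound : ∀ l : lp (fun _ : ℕ => 𝕜) p', ‖ulin l‖ ≤ C * ‖l‖ := fun l => by
      calc ‖ulin l‖ ≤ ∑' j, ‖l j • x j‖ := norm_tsum_le_tsum_norm (key_bound hp p' hconj hx l).1
        _ ≤ C * ‖l‖ := (key_bound hp p' hconj hx l).2
    let u : lp (fun _ : ℕ => 𝕜) p' →L[𝕜] F := ulin.mkContinuous C hbound
    refine ⟨⟨lp (fun _ : ℕ => 𝕜) p'⟩, u, ?_⟩
    have himg : u '' Metric.closedBall 0 1 = pSumSet 𝕜 p' x := by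
      ext y
      constructor
      · rintro ⟨l, hl, rfl⟩
        exact ⟨l, mem_closedBall_zero_iff.mp hl, rfl⟩
      · rintro ⟨l, hl, rfl⟩
        exact ⟨l, mem_closedBall_zero_iff.mpr hl, rfl⟩
    rw [himg]
    exact ⟨⟨x, hx, fun y hy => hy⟩, hsub⟩
  · rintro ⟨H, u, ⟨x, hx, hsub⟩, hK⟩
    exact ⟨x, hx, fun y hy => hsub (hK hy)⟩
end

section
/- Let p ≥ 1 and let A : E_1 × ⋯ × E_n → F be a continuous n-linear operator such that A(B_{E_1} × ⋯ × B_{E_n}) is relatively p-compact. Define ‖A‖_{L_{K_p}} as the infimum of ‖(x_j)‖_{ℓ_p(F)} over all sequences (x_j) ∈ ℓ_p(F) with A(B_{E_1} × ⋯ × B_{E_n}) ⊆ {∑_j λ_j x_j : (λ_j) ∈ B_{ℓ_{p'}}}, and ‖A‖_{L_{⟨K_p⟩}} as the infimum of ‖u‖_{K_p} over all p-compact linear operators u : H → F (H a Banach space) with A(B_{E_1} × ⋯ × B_{E_n}) ⊆ u(B_H). Then ‖A‖_{L_{K_p}} = ‖A‖_{L_{⟨K_p⟩}}. -/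
open scoped BigOperators ENNReal

set_option synthInstance.maxHeartbeats 1000000
set_option maxHeartbeats 1000000

section Aux

variable {𝕜 : Type} [RCLike 𝕜] {F : Type} [NormedAddCommGroup F] [NormedSpace 𝕜 F]
  [CompleteSpace F] {p : ℝ} (p' : ℝ≥0∞) [Fact (1 ≤ p')]

set_option linter.unusedSectionVars false in
lemma holder_aux (hp : 1 ≤ p) (hconj : 1 / ENNReal.ofReal p + 1 / p' = 1)
    (x : ℕ → F) (hx : Summable fun j => ‖x j‖ ^ p) (l : lp (fun _ : ℕ => 𝕜) p') :
    Summable (fun j => ‖l j‖ * ‖x j‖) ∧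
      ∑' j, ‖l j‖ * ‖x j‖ ≤ ‖l‖ * (∑' j, ‖x j‖ ^ p) ^ (1 / p) := by
  have hppos : (0:ℝ) < p := lt_of_lt_of_le one_pos hp
  rcases eq_or_ne p' ∞ with rfl | hp'top
  · have h1 : 1 / ENNReal.ofReal p = 1 := by simpa using hconj
    have h2 : ENNReal.ofReal p = 1 := by rwa [one_div, ENNReal.inv_eq_one] at h1
    have hp1 : p = 1 := ENNReal.ofReal_eq_one.mp h2
    subst hp1
    simp only [Real.rpow_one] at hx ⊢
    have hl : ∀ j, ‖l j‖ ≤ ‖l‖ := fun j => lp.norm_apply_le_norm ENNReal.top_ne_zero l j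
    have hdom : ∀ j, ‖l j‖ * ‖x j‖ ≤ ‖l‖ * ‖x j‖ := fun j =>
      mul_le_mul_of_nonneg_right (hl j) (norm_nonneg _)
    have hS : Summable (fun j => ‖l j‖ * ‖x j‖) :=
      Summable.of_nonneg_of_le (fun j => mul_nonneg (norm_nonneg _) (norm_nonneg _)) hdom
        (hx.mul_left ‖l‖)
    refine ⟨hS, ?_⟩
    calc ∑' j, ‖l j‖ * ‖x j‖ ≤ ∑' j, ‖l‖ * ‖x j‖ := Summable.tsum_le_tsum hdom hS (hx.mul_left ‖l‖)
      _ = ‖l‖ * ∑' j, ‖x j‖ := tsum_mul_left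
      _ = ‖l‖ * (∑' j, ‖x j‖) ^ ((1:ℝ)/1) := by norm_num
  · -- p' finite
    have ha0 : ENNReal.ofReal p ≠ 0 := by
      simp only [ne_eq, ENNReal.ofReal_eq_zero, not_le]; linarith
    have hp'0 : p' ≠ 0 := by
      have h := Fact.out (p := (1:ℝ≥0∞) ≤ p')
      exact fun h0 => by simp [h0] at h
    have hreal : 1/p + 1/p'.toReal = 1 := by
      have := congrArg ENNReal.toReal hconj
      rw [ENNReal.toReal_add, ENNReal.toReal_div, ENNReal.toReal_div, ENNReal.toReal_one,
        ENNReal.toReal_ofReal hppos.le] at this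
      · exact this
      · exact (ENNReal.div_lt_top ENNReal.one_ne_top ha0).ne
      · exact (ENNReal.div_lt_top ENNReal.one_ne_top hp'0).ne
    have hq1 : 1 ≤ p'.toReal := by
      have h := Fact.out (p := (1:ℝ≥0∞) ≤ p')
      simpa using ENNReal.toReal_mono hp'top h
    have hqgt : 1 < p'.toReal := by
      rcases lt_or_eq_of_le hq1 with h | h
      · exact h
      · exfalso
        rw [← h] at hreal
        have : (0:ℝ) < 1/p := by positivity
        norm_num at hreal; linarith
    have hpq : p'.toReal.HolderConjugate ((ENNReal.ofReal p).toReal) := by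
      rw [ENNReal.toReal_ofReal hppos.le]
      exact Real.holderConjugate_iff.mpr ⟨hqgt, by rw [← one_div, ← one_div]; linarith⟩
    set y : lp (fun _ : ℕ => 𝕜) (ENNReal.ofReal p) :=
      ⟨(fun j => ((‖x j‖ : ℝ) : 𝕜)), memℓp_gen (by
        simpa [ENNReal.toReal_ofReal hppos.le, RCLike.norm_ofReal, abs_norm] using hx)⟩ with hy
    have hyj : ∀ j, ‖(y : ∀ _ : ℕ, 𝕜) j‖ = ‖x j‖ := fun j => by
      rw [show (y : ∀ _ : ℕ, 𝕜) j = ((‖x j‖ : ℝ) : 𝕜) from rfl, RCLike.norm_ofReal, abs_norm]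
    have hnormy : ‖y‖ = (∑' j, ‖x j‖ ^ p) ^ (1/p) := by
      rw [lp.norm_eq_tsum_rpow (by rw [ENNReal.toReal_ofReal hppos.le]; exact hppos) y]
      simp only [ENNReal.toReal_ofReal hppos.le]
      congr 1
      exact tsum_congr fun j => by rw [hyj j]
    obtain ⟨hs, hle⟩ := lp.tsum_mul_le_mul_norm hpq l y
    simp only [hyj] at hs hle
    rw [hnormy] at hle
    exact ⟨hs, hle⟩


lemma exists_op (hp : 1 ≤ p) (hconj : 1 / ENNReal.ofReal p + 1 / p' = 1)
    (x : ℕ → F) (hx : Summable fun j => ‖x j‖ ^ p) :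
    ∃ H : BanachSp 𝕜, ∃ u : H.X →L[𝕜] F,
      u '' Metric.closedBall 0 1 = pSumSet 𝕜 p' x := by
  have hold := fun l : lp (fun _ : ℕ => 𝕜) p' => holder_aux p' hp hconj x hx l
  have hsum : ∀ l : lp (fun _ : ℕ => 𝕜) p', Summable fun j => l j • x j := fun l =>
    Summable.of_norm (by simpa [norm_smul] using (hold l).1)
  set C := (∑' j, ‖x j‖ ^ p) ^ (1 / p) with hC
  let L : lp (fun _ : ℕ => 𝕜) p' →ₗ[𝕜] F :=
  { toFun := fun l => ∑' j, l j • x j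
    map_add' := fun l m => by
      have h : ∀ j, (↑(l + m) : ∀ _ : ℕ, 𝕜) j • x j = l j • x j + m j • x j := fun j => by
        rw [lp.coeFn_add]; simp [add_smul]
      dsimp only
      rw [tsum_congr h, Summable.tsum_add (hsum l) (hsum m)]
    map_smul' := fun c l => by
      have h : ∀ j, (↑(c • l) : ∀ _ : ℕ, 𝕜) j • x j = c • (l j • x j) := fun j => by
        rw [lp.coeFn_smul]; simp [smul_smul]
      dsimp only
      rw [tsum_congr h, Summable.tsum_const_smul c (hsum l)]; rfl }
  let u : lp (fun _ : ℕ => 𝕜) p' →L[𝕜] F := L.mkContinuous C (fun l => by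
    have h1 : Summable fun j => ‖l j • x j‖ := by simpa [norm_smul] using (hold l).1
    calc ‖L l‖ = ‖∑' j, l j • x j‖ := rfl
      _ ≤ ∑' j, ‖l j • x j‖ := norm_tsum_le_tsum_norm h1
      _ = ∑' j, ‖l j‖ * ‖x j‖ := tsum_congr fun j => norm_smul _ _
      _ ≤ ‖l‖ * C := (hold l).2
      _ = C * ‖l‖ := mul_comm _ _)
  refine ⟨{ X := lp (fun _ : ℕ => 𝕜) p' }, u, ?_⟩
  ext y
  constructor
  · rintro ⟨l, hl, rfl⟩
    exact ⟨l, mem_closedBall_zero_iff.mp hl, rfl⟩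
  · rintro ⟨l, hl, rfl⟩
    exact ⟨l, mem_closedBall_zero_iff.mpr hl, rfl⟩


end Aux

/-- for a continuous multilinear operator `A` whose image of the
product of unit balls is relatively p-compact, the norm
`‖A‖_{L_{K_p}}` (infimum of `‖(x_j)‖_{ℓ_p}` over representing sequences)
coincides with `‖A‖_{L_{⟨K_p⟩}}` (infimum of `‖u‖_{K_p}` over p-compact linear
operators `u : H → F` with `A(B_{E_1}×⋯×B_{E_n}) ⊆ u(B_H)`). -/
theorem stmt14 {𝕜 : Type} [RCLike 𝕜] {n : ℕ} {E : Fin n → Type}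
    [∀ i, NormedAddCommGroup (E i)] [∀ i, NormedSpace 𝕜 (E i)]
    [∀ i, CompleteSpace (E i)]
    {F : Type} [NormedAddCommGroup F] [NormedSpace 𝕜 F] [CompleteSpace F]
    {p : ℝ} (hp : 1 ≤ p) (p' : ℝ≥0∞) [Fact (1 ≤ p')]
    (hconj : 1 / ENNReal.ofReal p + 1 / p' = 1)
    (A : ContinuousMultilinearMap 𝕜 E F)
    (hA : RelPCompact 𝕜 p p' (A '' {x : ∀ i, E i | ∀ i, ‖x i‖ ≤ 1})) :
    kpSetNorm 𝕜 p p' (A '' {x : ∀ i, E i | ∀ i, ‖x i‖ ≤ 1}) =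
      sInf {c : ℝ | ∃ H : BanachSp 𝕜, ∃ u : H.X →L[𝕜] F,
        RelPCompact 𝕜 p p' (u '' Metric.closedBall 0 1) ∧
        A '' {x : ∀ i, E i | ∀ i, ‖x i‖ ≤ 1} ⊆ u '' Metric.closedBall 0 1 ∧
        c = kpSetNorm 𝕜 p p' (u '' Metric.closedBall 0 1)} := by
    classical
  have hnonnegT : ∀ (K' : Set F) (c : ℝ), (∃ x : ℕ → F, Summable (fun j => ‖x j‖ ^ p) ∧
      K' ⊆ pSumSet 𝕜 p' x ∧ c = (∑' j, ‖x j‖ ^ p) ^ (1 / p)) → 0 ≤ c := by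
    rintro K' c ⟨x, -, -, rfl⟩
    exact Real.rpow_nonneg (tsum_nonneg fun j => Real.rpow_nonneg (norm_nonneg _) _) _
  obtain ⟨x₀, hx₀, hK₀⟩ := hA
  obtain ⟨H₀, u₀, hu₀⟩ := exists_op (𝕜 := 𝕜) p' hp hconj x₀ hx₀
  have hmem₀ : kpSetNorm 𝕜 p p' (u₀ '' Metric.closedBall 0 1) ∈
      {c : ℝ | ∃ H : BanachSp 𝕜, ∃ u : H.X →L[𝕜] F,
        RelPCompact 𝕜 p p' (u '' Metric.closedBall 0 1) ∧
        A '' {x : ∀ i, E i | ∀ i, ‖x i‖ ≤ 1} ⊆ u '' Metric.closedBall 0 1 ∧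
        c = kpSetNorm 𝕜 p p' (u '' Metric.closedBall 0 1)} :=
    ⟨H₀, u₀, ⟨x₀, hx₀, hu₀ ▸ subset_rfl⟩, by rw [hu₀]; exact hK₀, rfl⟩
  apply le_antisymm
  · refine le_csInf ⟨_, hmem₀⟩ ?_
    rintro c ⟨H, u, hcpt, hKsub, rfl⟩
    obtain ⟨xc, hxc, hsub⟩ := hcpt
    unfold kpSetNorm
    apply csInf_le_csInf
    · exact ⟨0, fun c hc => hnonnegT _ c hc⟩
    · exact ⟨_, xc, hxc, hsub, rfl⟩
    · rintro c ⟨x, hx, hss, rfl⟩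
      exact ⟨x, hx, hKsub.trans hss, rfl⟩
  · conv_rhs => rw [kpSetNorm]
    refine le_csInf ⟨_, x₀, hx₀, hK₀, rfl⟩ ?_
    rintro t ⟨x, hx, hss, rfl⟩
    obtain ⟨H, u, hu⟩ := exists_op (𝕜 := 𝕜) p' hp hconj x hx
    have hmem : kpSetNorm 𝕜 p p' (u '' Metric.closedBall 0 1) ∈
        {c : ℝ | ∃ H : BanachSp 𝕜, ∃ u : H.X →L[𝕜] F,
          RelPCompact 𝕜 p p' (u '' Metric.closedBall 0 1) ∧
          A '' {x : ∀ i, E i | ∀ i, ‖x i‖ ≤ 1} ⊆ u '' Metric.closedBall 0 1 ∧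
          c = kpSetNorm 𝕜 p p' (u '' Metric.closedBall 0 1)} :=
      ⟨H, u, ⟨x, hx, hu ▸ subset_rfl⟩, by rw [hu]; exact hss, rfl⟩
    refine csInf_le_of_le ⟨0, ?_⟩ hmem ?_
    · rintro c ⟨H', u', hcpt', hsub', rfl⟩
      exact Real.sInf_nonneg fun c hc => hnonnegT _ c hc
    · unfold kpSetNorm
      exact csInf_le ⟨0, fun c hc => hnonnegT _ c hc⟩ ⟨x, hx, hu ▸ subset_rfl, rfl⟩
end

section
/- Let 0 < p ≤ 1 and let I be a p-Banach operator ideal. Let (A_j)_{j=1}^∞ be continuous n-linear operators from E_1 × ⋯ × E_n to F such that for each j there exist a Banach space H_j and u_j ∈ I(H_j;F) with A_j(B_{E_1} × ⋯ × B_{E_n}) ⊆ u_j(B_{H_j}), and suppose ∑_j ‖u_j‖_I^p < ∞. Then A = ∑_j A_j converges in operator norm, and there exist a Banach space H (namely the ℓ_∞-direct sum of the H_j) and u ∈ I(H;F) with A(B_{E_1} × ⋯ × B_{E_n}) ⊆ u(B_H) and ‖u‖_I^p ≤ ∑_j ‖u_j‖_I^p. -/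
open scoped BigOperators

/-- A `p`-Banach operator ideal: components `mem H F` of bounded linear
operators with a `p`-norm `nrm` dominating the operator norm, containing the
finite rank operators, satisfying the ideal inequality
`‖t∘u∘s‖_I ≤ ‖t‖‖u‖_I‖s‖`, and such that `∑ v_j` converges in `I` with
`‖∑ v_j‖_I^p ≤ ∑ ‖v_j‖_I^p` whenever `∑ ‖v_j‖_I^p < ∞`. -/
structure PBanachOperatorIdeal (𝕜 : Type) [RCLike 𝕜] (p : ℝ) where
  mem : ∀ H F : BanachSp 𝕜, Set (H.X →L[𝕜] F.X)
  nrm : ∀ H F : BanachSp 𝕜, (H.X →L[𝕜] F.X) → ℝ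
  nrm_nonneg : ∀ (H F : BanachSp 𝕜) (u : H.X →L[𝕜] F.X), 0 ≤ nrm H F u
  opNorm_le_nrm : ∀ (H F : BanachSp 𝕜), ∀ u ∈ mem H F, ‖u‖ ≤ nrm H F u
  finiteRank_mem : ∀ (H F : BanachSp 𝕜) (u : H.X →L[𝕜] F.X),
    FiniteDimensional 𝕜 (LinearMap.range (u : H.X →ₗ[𝕜] F.X)) → u ∈ mem H F
  comp_mem : ∀ (G H F K : BanachSp 𝕜) (s : G.X →L[𝕜] H.X) (u : H.X →L[𝕜] F.X)
    (t : F.X →L[𝕜] K.X), u ∈ mem H F →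
      t.comp (u.comp s) ∈ mem G K ∧
      nrm G K (t.comp (u.comp s)) ≤ ‖t‖ * nrm H F u * ‖s‖
  series_mem : ∀ (H F : BanachSp 𝕜) (v : ℕ → H.X →L[𝕜] F.X),
    (∀ j, v j ∈ mem H F) → Summable (fun j => nrm H F (v j) ^ p) →
      ∃ S : H.X →L[𝕜] F.X, HasSum v S ∧ S ∈ mem H F ∧
        nrm H F S ^ p ≤ ∑' j, nrm H F (v j) ^ p

theorem aux_opNorm_le_of_unitBall {𝕜 : Type} [RCLike 𝕜] {n : ℕ} {E : Fin n → Type}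
    [∀ i, NormedAddCommGroup (E i)] [∀ i, NormedSpace 𝕜 (E i)]
    {G : Type} [NormedAddCommGroup G] [NormedSpace 𝕜 G]
    (M : ContinuousMultilinearMap 𝕜 E G) {C : ℝ} (hC : 0 ≤ C)
    (h : ∀ x : ∀ i, E i, (∀ i, ‖x i‖ ≤ 1) → ‖M x‖ ≤ C) : ‖M‖ ≤ C := by
  refine M.opNorm_le_bound hC fun x => ?_
  by_cases hx : ∃ i, x i = 0
  · obtain ⟨i, hi⟩ := hx
    rw [M.map_coord_zero i hi, norm_zero]
    have : ∏ i, ‖x i‖ = 0 := Finset.prod_eq_zero (Finset.mem_univ i) (by simp [hi])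
    rw [this, mul_zero]
  · push_neg at hx
    have hxn : ∀ i, ‖x i‖ ≠ 0 := fun i => norm_ne_zero_iff.2 (hx i)
    set m : ∀ i, E i := fun i => ((‖x i‖ : 𝕜))⁻¹ • x i with hm
    have hmn : ∀ i, ‖m i‖ ≤ 1 := by
      intro i
      rw [hm]
      simp only [norm_smul, norm_inv, RCLike.norm_ofReal, abs_of_nonneg (norm_nonneg (x i))]
      rw [inv_mul_cancel₀ (hxn i)]
    have hxeq : (fun i => (‖x i‖ : 𝕜) • m i) = x := by
      funext i
      rw [hm, smul_smul, mul_inv_cancel₀ (by exact_mod_cast hxn i), one_smul]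
    calc ‖M x‖ = ‖M (fun i => (‖x i‖ : 𝕜) • m i)‖ := by rw [hxeq]
      _ = ‖(∏ i, (‖x i‖ : 𝕜)) • M m‖ := by rw [M.map_smul_univ]
      _ = (∏ i, ‖x i‖) * ‖M m‖ := by
          rw [norm_smul]
          congr 1
          rw [← RCLike.ofReal_prod, RCLike.norm_ofReal,
            abs_of_nonneg (Finset.prod_nonneg fun i _ => norm_nonneg _)]
      _ ≤ (∏ i, ‖x i‖) * C :=
          mul_le_mul_of_nonneg_left (h m hmn) (Finset.prod_nonneg fun i _ => norm_nonneg _)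
      _ = C * ∏ i, ‖x i‖ := mul_comm _ _

set_option maxHeartbeats 1000000 in
/-- let `I` be a `p`-Banach operator ideal (`0 < p ≤ 1`), and let
`(A_j)` be continuous `n`-linear operators into `F` such that
`A_j(B_{E_1}×⋯×B_{E_n}) ⊆ u_j(B_{H_j})` with `u_j ∈ I(H_j;F)` and
`∑_j ‖u_j‖_I^p < ∞`. Then `∑_j A_j` converges in operator norm to `A` and there
are a Banach space `H` and `u ∈ I(H;F)` with `A(B_{E_1}×⋯×B_{E_n}) ⊆ u(B_H)`
and `‖u‖_I^p ≤ ∑_j ‖u_j‖_I^p`. -/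
theorem stmt19 {𝕜 : Type} [RCLike 𝕜] {p : ℝ} (hp : 0 < p) (hp1 : p ≤ 1)
    (I : PBanachOperatorIdeal 𝕜 p)
    {n : ℕ} {E : Fin n → Type}
    [∀ i, NormedAddCommGroup (E i)] [∀ i, NormedSpace 𝕜 (E i)]
    [∀ i, CompleteSpace (E i)]
    (F : BanachSp 𝕜)
    (A : ℕ → ContinuousMultilinearMap 𝕜 E F.X)
    (Hs : ℕ → BanachSp 𝕜) (u : ∀ j, (Hs j).X →L[𝕜] F.X)
    (humem : ∀ j, u j ∈ I.mem (Hs j) F)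
    (hsub : ∀ j, A j '' {x : ∀ i, E i | ∀ i, ‖x i‖ ≤ 1} ⊆
      u j '' Metric.closedBall 0 1)
    (hsum : Summable fun j => I.nrm (Hs j) F (u j) ^ p) :
    ∃ S : ContinuousMultilinearMap 𝕜 E F.X, HasSum A S ∧
      ∃ H : BanachSp 𝕜, ∃ w ∈ I.mem H F,
        S '' {x : ∀ i, E i | ∀ i, ‖x i‖ ≤ 1} ⊆ w '' Metric.closedBall 0 1 ∧
        I.nrm H F w ^ p ≤ ∑' j, I.nrm (Hs j) F (u j) ^ p := by
  classical
  set c : ℕ → ℝ := fun j => I.nrm (Hs j) F (u j) with hcdef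
  have hc0 : ∀ j, 0 ≤ c j := fun j => I.nrm_nonneg _ _ _
  -- operator norm bound for A j
  have hA : ∀ j, ‖A j‖ ≤ c j := by
    intro j
    refine aux_opNorm_le_of_unitBall (A j) (hc0 j) fun x hx => ?_
    obtain ⟨y, hy, hyx⟩ := hsub j ⟨x, hx, rfl⟩
    rw [← hyx]
    calc ‖(u j) y‖ ≤ ‖u j‖ * ‖y‖ := (u j).le_opNorm y
      _ ≤ c j * 1 := mul_le_mul (I.opNorm_le_nrm _ _ _ (humem j))
          (mem_closedBall_zero_iff.mp hy) (norm_nonneg y) (hc0 j)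
      _ = c j := mul_one _
  -- eventually c j ≤ c j ^ p
  have htend : Filter.Tendsto (fun j => c j ^ p) Filter.atTop (nhds 0) :=
    hsum.tendsto_atTop_zero
  have hev : ∀ᶠ j in Filter.atTop, c j ≤ c j ^ p := by
    filter_upwards [htend.eventually (gt_mem_nhds one_pos)] with j hj
    have h1 : c j ≤ 1 := by
      by_contra h1
      push_neg at h1
      exact absurd ((Real.one_lt_rpow_iff_of_pos (lt_trans one_pos h1)).2
        (Or.inl ⟨h1, hp⟩)) (not_lt.2 hj.le)
    calc c j = c j ^ (1 : ℝ) := (Real.rpow_one _).symm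
      _ ≤ c j ^ p := Real.rpow_le_rpow_of_exponent_ge' (hc0 j) h1 hp.le hp1
  -- summability of A
  have hsumA : Summable A := by
    refine Summable.of_norm_bounded_eventually_nat hsum ?_
    filter_upwards [hev] with j hj
    exact le_trans (by simpa using hA j) hj
  refine ⟨∑' j, A j, hsumA.hasSum, ?_⟩
  -- the ℓ∞ direct sum
  haveI : Fact ((1 : ENNReal) ≤ ⊤) := ⟨le_top⟩
  let H : BanachSp 𝕜 := ⟨lp (fun j => (Hs j).X) ⊤⟩
  -- coordinate projections
  let πl : ∀ j, H.X →ₗ[𝕜] (Hs j).X := fun j =>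
    { toFun := fun f => f j
      map_add' := fun f g => rfl
      map_smul' := fun a f => rfl }
  let π : ∀ j, H.X →L[𝕜] (Hs j).X := fun j =>
    (πl j).mkContinuous 1 fun f => by
      rw [one_mul]; exact lp.norm_apply_le_norm ENNReal.top_ne_zero f j
  have hπ : ∀ j, ‖π j‖ ≤ 1 := fun j =>
    (πl j).mkContinuous_norm_le zero_le_one _
  let v : ℕ → H.X →L[𝕜] F.X := fun j => (u j).comp (π j)
  have hv : ∀ j, v j ∈ I.mem H F ∧ I.nrm H F (v j) ≤ c j := by
    intro j
    have h := I.comp_mem H (Hs j) F F (π j) (u j) (ContinuousLinearMap.id 𝕜 F.X) (humem j)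
    rw [ContinuousLinearMap.id_comp] at h
    refine ⟨h.1, h.2.trans ?_⟩
    calc ‖ContinuousLinearMap.id 𝕜 F.X‖ * c j * ‖π j‖
        ≤ 1 * c j * 1 :=
          mul_le_mul (mul_le_mul_of_nonneg_right ContinuousLinearMap.norm_id_le (hc0 j))
            (hπ j) (norm_nonneg _) (by simpa using hc0 j)
      _ = c j := by ring
  have hvle : ∀ j, I.nrm H F (v j) ^ p ≤ c j ^ p := fun j =>
    Real.rpow_le_rpow (I.nrm_nonneg _ _ _) (hv j).2 hp.le
  have hvsum : Summable fun j => I.nrm H F (v j) ^ p :=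
    Summable.of_nonneg_of_le (fun j => Real.rpow_nonneg (I.nrm_nonneg _ _ _) p) hvle hsum
  obtain ⟨w, hwsum, hwmem, hwle⟩ := I.series_mem H F v (fun j => (hv j).1) hvsum
  refine ⟨H, w, hwmem, ?_, hwle.trans (hvsum.tsum_le_tsum hvle hsum)⟩
  rintro - ⟨x, hx, rfl⟩
  choose y hy hyx using fun j => hsub j ⟨x, hx, rfl⟩
  have hy1 : ∀ j, ‖y j‖ ≤ 1 := fun j => mem_closedBall_zero_iff.mp (hy j)
  have hmem : Memℓp (fun j => y j) ⊤ :=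
    memℓp_infty ⟨1, by rintro - ⟨j, rfl⟩; exact hy1 j⟩
  let Y : H.X := ⟨fun j => y j, hmem⟩
  have hYnorm : ‖Y‖ ≤ 1 := lp.norm_le_of_forall_le zero_le_one hy1
  refine ⟨Y, mem_closedBall_zero_iff.mpr hYnorm, ?_⟩
  have h1 : HasSum (fun j => v j Y) (w Y) := by
    have hc : Continuous fun t : H.X →L[𝕜] F.X => t Y :=
      continuous_id.clm_apply continuous_const
    exact hwsum.map (AddMonoidHom.mk' (fun t : H.X →L[𝕜] F.X => t Y)
      (fun a b => rfl)) hc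
  have h2 : ∀ j, v j Y = A j x := fun j => hyx j
  have h3 : HasSum (fun j => A j x) (w Y) := by
    rw [show (fun j => A j x) = fun j => v j Y from funext fun j => (h2 j).symm]
    exact h1
  have h4 : HasSum (fun j => A j x) ((∑' j, A j) x) :=
    ContinuousMultilinearMap.hasSum_eval hsumA.hasSum x
  exact (h4.unique h3).symm
end
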